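/- Let x = (X₁,Y₁,X₂,Y₂) ∈ ℂ⁴ satisfy X₁ ≠ X₂, Y₁² = Q(X₁) and Y₂² = Q(X₂). Then, with u₂, u₄, u₅, u₇ regarded as functions on the open set {X₁ ≠ X₂} ⊂ ℂ⁴, the following hold at x: (𝓛₅*u₂)(x) = u₂u₅ − u₇ evaluated at x; (𝓛₅*u₄)(x) = 2(u₂u₇ − u₄u₅) evaluated at x; (𝓛₅*u₅)(x) = u₅² + 14u₂⁵ − 28u₂³u₄ − 18u₂u₄² − 8y₄u₂u₄ + 2y₆(u₂² + u₄) − 2y₈u₂ + y₁₀ evaluated at x; (𝓛₅*u₇)(x) = −u₅u₇ + 21u₂⁶ + 35u₂⁴u₄ − 21u₂²u₄² − 3u₄³ + 2y₄(5u₂⁴ − u₄²) − 2y₆(3u₂³ − u₂u₄) + y₈(3u₂² − u₄) − y₁₀u₂ evaluated at x. -/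

import Mathlib

/- Context: ℂ⁴ is modelled as `Fin 4 → ℂ` with coordinates 0 ↦ X₁, 1 ↦ Y₁, 2 ↦ X₂,
3 ↦ Y₂.  `pd i f x` is the complex partial derivative of `f` along the `i`-th
coordinate direction.  Q(X) = X⁷ + y₄X⁵ − y₆X⁴ + y₈X³ − y₁₀X² + y₁₂X − y₁₄,
Q'(X) = 7X⁶ + 5y₄X⁴ − 4y₆X³ + 3y₈X² − 2y₁₀X + y₁₂. -/

noncomputable section

/-- Complex partial derivative along the `i`-th coordinate direction. -/
def pd (i : Fin 4) (f : (Fin 4 → ℂ) → ℂ) (x : Fin 4 → ℂ) : ℂ :=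
  fderiv ℂ f x (Pi.single i 1)

def Qf (y4 y6 y8 y10 y12 y14 X : ℂ) : ℂ :=
  X ^ 7 + y4 * X ^ 5 - y6 * X ^ 4 + y8 * X ^ 3 - y10 * X ^ 2 + y12 * X - y14

def Qd (y4 y6 y8 y10 y12 X : ℂ) : ℂ :=
  7 * X ^ 6 + 5 * y4 * X ^ 4 - 4 * y6 * X ^ 3 + 3 * y8 * X ^ 2 - 2 * y10 * X + y12

/-- `D₁ f = 2Y₁·∂f/∂X₁ + Q'(X₁)·∂f/∂Y₁`. -/
def D1 (y4 y6 y8 y10 y12 : ℂ) (f : (Fin 4 → ℂ) → ℂ) (x : Fin 4 → ℂ) : ℂ :=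
  2 * x 1 * pd 0 f x + Qd y4 y6 y8 y10 y12 (x 0) * pd 1 f x

/-- `D₂ f = 2Y₂·∂f/∂X₂ + Q'(X₂)·∂f/∂Y₂`. -/
def D2 (y4 y6 y8 y10 y12 : ℂ) (f : (Fin 4 → ℂ) → ℂ) (x : Fin 4 → ℂ) : ℂ :=
  2 * x 3 * pd 2 f x + Qd y4 y6 y8 y10 y12 (x 2) * pd 3 f x

/-- `𝓛₅* f = (X₂·D₁f − X₁·D₂f)/(X₁ − X₂)`. -/
def L5 (y4 y6 y8 y10 y12 : ℂ) (f : (Fin 4 → ℂ) → ℂ) (x : Fin 4 → ℂ) : ℂ :=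
  (x 2 * D1 y4 y6 y8 y10 y12 f x - x 0 * D2 y4 y6 y8 y10 y12 f x) / (x 0 - x 2)

def u2f (x : Fin 4 → ℂ) : ℂ := (x 0 + x 2) / 2
def u4f (x : Fin 4 → ℂ) : ℂ := (x 0 - x 2) ^ 2 / 4
def u5f (x : Fin 4 → ℂ) : ℂ := (x 1 - x 3) / (x 0 - x 2)
def u7f (x : Fin 4 → ℂ) : ℂ := (x 1 + x 3) / 2

lemma pd_eq' {f : (Fin 4 → ℂ) → ℂ} {L : (Fin 4 → ℂ) →L[ℂ] ℂ} {x : Fin 4 → ℂ} (i : Fin 4)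
    (h : HasFDerivAt f L x) : pd i f x = L (Pi.single i 1) := by
  rw [pd, h.fderiv]

lemma hproj' (j : Fin 4) (x : Fin 4 → ℂ) :
    HasFDerivAt (fun x : Fin 4 → ℂ => x j)
      (ContinuousLinearMap.proj (R := ℂ) (φ := fun _ : Fin 4 => ℂ) j) x :=
  (ContinuousLinearMap.proj (R := ℂ) (φ := fun _ : Fin 4 => ℂ) j).hasFDerivAt

lemma pd_u2' (x : Fin 4 → ℂ) :
    pd 0 u2f x = 1/2 ∧ pd 1 u2f x = 0 ∧ pd 2 u2f x = 1/2 ∧ pd 3 u2f x = 0 := by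
  have hu : u2f = fun x : Fin 4 → ℂ => (x 0 + x 2) * (2 : ℂ)⁻¹ :=
    funext fun x => div_eq_mul_inv _ _
  refine ⟨?_, ?_, ?_, ?_⟩ <;>
    rw [hu, pd_eq' (f := fun x : Fin 4 → ℂ => (x 0 + x 2) * (2 : ℂ)⁻¹) _ (((hproj' 0 x).add (hproj' 2 x)).mul (hasFDerivAt_const (2:ℂ)⁻¹ x))] <;>
    simp <;> norm_num

lemma pd_u7' (x : Fin 4 → ℂ) :
    pd 0 u7f x = 0 ∧ pd 1 u7f x = 1/2 ∧ pd 2 u7f x = 0 ∧ pd 3 u7f x = 1/2 := by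
  have hu : u7f = fun x : Fin 4 → ℂ => (x 1 + x 3) * (2 : ℂ)⁻¹ :=
    funext fun x => div_eq_mul_inv _ _
  refine ⟨?_, ?_, ?_, ?_⟩ <;>
    rw [hu, pd_eq' (f := fun x : Fin 4 → ℂ => (x 1 + x 3) * (2 : ℂ)⁻¹) _ (((hproj' 1 x).add (hproj' 3 x)).mul (hasFDerivAt_const (2:ℂ)⁻¹ x))] <;>
    simp <;> norm_num

lemma pd_u4' (x : Fin 4 → ℂ) :
    pd 0 u4f x = (x 0 - x 2)/2 ∧ pd 1 u4f x = 0 ∧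
    pd 2 u4f x = -((x 0 - x 2)/2) ∧ pd 3 u4f x = 0 := by
  have hu : u4f = fun x : Fin 4 → ℂ => ((x 0 - x 2) * (x 0 - x 2)) * (4 : ℂ)⁻¹ :=
    funext fun x => by rw [u4f]; ring
  refine ⟨?_, ?_, ?_, ?_⟩ <;>
    rw [hu, pd_eq' (f := fun x : Fin 4 → ℂ => ((x 0 - x 2) * (x 0 - x 2)) * (4 : ℂ)⁻¹) _ ((((hproj' 0 x).sub (hproj' 2 x)).mul ((hproj' 0 x).sub (hproj' 2 x))).mul
      (hasFDerivAt_const (4:ℂ)⁻¹ x))] <;>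
    simp <;> ring

lemma pd_u5' (x : Fin 4 → ℂ) (hx : x 0 - x 2 ≠ 0) :
    pd 0 u5f x = -((x 1 - x 3) / (x 0 - x 2)^2) ∧ pd 1 u5f x = 1/(x 0 - x 2) ∧
    pd 2 u5f x = (x 1 - x 3) / (x 0 - x 2)^2 ∧ pd 3 u5f x = -(1/(x 0 - x 2)) := by
  have hu : u5f = fun x : Fin 4 → ℂ => (x 1 - x 3) * (x 0 - x 2)⁻¹ :=
    funext fun x => div_eq_mul_inv _ _
  have hinv : HasFDerivAt (fun x : Fin 4 → ℂ => (x 0 - x 2)⁻¹)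
      ((ContinuousLinearMap.smulRight (1 : ℂ →L[ℂ] ℂ) (-((x 0 - x 2) ^ 2)⁻¹)).comp
        (ContinuousLinearMap.proj (R := ℂ) (φ := fun _ : Fin 4 => ℂ) 0
          - ContinuousLinearMap.proj 2)) x :=
    (hasFDerivAt_inv hx).comp x ((hproj' 0 x).sub (hproj' 2 x))
  refine ⟨?_, ?_, ?_, ?_⟩ <;>
    rw [hu, pd_eq' (f := fun x : Fin 4 → ℂ => (x 1 - x 3) * (x 0 - x 2)⁻¹) _ (((hproj' 1 x).sub (hproj' 3 x)).mul hinv)] <;>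
    simp [ContinuousLinearMap.smulRight_apply] <;> field_simp <;> ring

set_option maxHeartbeats 1000000 in
/-- At any point of the curve-square with `X₁ ≠ X₂`, the derivation `𝓛₅*` acts on
`u₂, u₄, u₅, u₇` by the stated polynomial formulas. -/
theorem statement10 (y4 y6 y8 y10 y12 y14 : ℂ) (x : Fin 4 → ℂ)
    (hx : x 0 ≠ x 2)
    (h1 : (x 1) ^ 2 = Qf y4 y6 y8 y10 y12 y14 (x 0))
    (h2 : (x 3) ^ 2 = Qf y4 y6 y8 y10 y12 y14 (x 2)) :
    L5 y4 y6 y8 y10 y12 u2f x = u2f x * u5f x - u7f x ∧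
    L5 y4 y6 y8 y10 y12 u4f x = 2 * (u2f x * u7f x - u4f x * u5f x) ∧
    L5 y4 y6 y8 y10 y12 u5f x =
      (u5f x) ^ 2 + 14 * (u2f x) ^ 5 - 28 * (u2f x) ^ 3 * u4f x
        - 18 * u2f x * (u4f x) ^ 2 - 8 * y4 * u2f x * u4f x
        + 2 * y6 * ((u2f x) ^ 2 + u4f x) - 2 * y8 * u2f x + y10 ∧
    L5 y4 y6 y8 y10 y12 u7f x =
      -(u5f x) * u7f x + 21 * (u2f x) ^ 6 + 35 * (u2f x) ^ 4 * u4f x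
        - 21 * (u2f x) ^ 2 * (u4f x) ^ 2 - 3 * (u4f x) ^ 3
        + 2 * y4 * (5 * (u2f x) ^ 4 - (u4f x) ^ 2)
        - 2 * y6 * (3 * (u2f x) ^ 3 - u2f x * u4f x)
        + y8 * (3 * (u2f x) ^ 2 - u4f x) - y10 * u2f x := by
  have hs : x 0 - x 2 ≠ 0 := sub_ne_zero.mpr hx
  simp only [Qf] at h1 h2
  obtain ⟨a0, a1, a2, a3⟩ := pd_u2' x
  obtain ⟨b0, b1, b2, b3⟩ := pd_u4' x
  obtain ⟨c0, c1, c2, c3⟩ := pd_u5' x hs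
  obtain ⟨d0, d1, d2, d3⟩ := pd_u7' x
  have hD : (x 1 - x 3) / (x 0 - x 2) * (x 0 - x 2) = x 1 - x 3 := div_mul_cancel₀ _ hs
  have hs1 : (x 0 - x 2) * (x 0 - x 2)⁻¹ = 1 := mul_inv_cancel₀ hs
  have hA : (x 1 - x 3) / (x 0 - x 2) ^ 2 * (x 0 - x 2) ^ 2 = x 1 - x 3 :=
    div_mul_cancel₀ _ (pow_ne_zero 2 hs)
  have hB : 1 / (x 0 - x 2) * (x 0 - x 2) = 1 := div_mul_cancel₀ _ hs
  have hC : ((x 1 - x 3) / (x 0 - x 2)) ^ 2 * (x 0 - x 2) ^ 2 = (x 1 - x 3) ^ 2 := by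
    rw [div_pow]; exact div_mul_cancel₀ _ (pow_ne_zero 2 hs)
  refine ⟨?_, ?_, ?_, ?_⟩
  · simp only [L5, D1, D2, a0, a1, a2, a3, u2f, u5f, u7f]
    rw [div_eq_iff hs]
    linear_combination ((x 0 + x 2) / 2) * hD - ((x 1 - x 3) * (x 0 + x 2)) * hs1
  · simp only [L5, D1, D2, b0, b1, b2, b3, u2f, u4f, u5f, u7f]
    rw [div_eq_iff hs]
    linear_combination ((x 0 - x 2) ^ 2 / 2) * hD
  · simp only [L5, D1, D2, Qd, c0, c1, c2, c3, u2f, u4f, u5f]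
    rw [div_eq_iff hs]
    refine mul_right_cancel₀ (pow_ne_zero 2 hs) ?_
    linear_combination (-2 * x 1 * x 2 - 2 * x 0 * x 3) * hA
      + ((x 2 * (7 * x 0 ^ 6 + 5 * y4 * x 0 ^ 4 - 4 * y6 * x 0 ^ 3 + 3 * y8 * x 0 ^ 2
            - 2 * y10 * x 0 + y12)
          + x 0 * (7 * x 2 ^ 6 + 5 * y4 * x 2 ^ 4 - 4 * y6 * x 2 ^ 3 + 3 * y8 * x 2 ^ 2
            - 2 * y10 * x 2 + y12)) * (x 0 - x 2)) * hB
      - (x 0 - x 2) * hC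
      - (x 0 + x 2) * h1 + (x 0 + x 2) * h2
  · simp only [L5, D1, D2, Qd, d0, d1, d2, d3, u2f, u4f, u5f, u7f]
    rw [div_eq_iff hs]
    linear_combination ((x 1 + x 3) / 2) * hD + h1 / 2 - h2 / 2


end
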